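/- Let n ≥ 2 and ε > 0. Suppose the finite sequence R_1, …, R_N of bounded axis-parallel rectangles in ℝ^n satisfies property (P_2) with parameter ε. Then for every t ∈ ℝ, the sequence of (n−1)-dimensional axis-parallel rectangles P_t(R_1), …, P_t(R_N) satisfies property (P_1) with the same parameter ε: |P_t(R_k) ∩ ∪_{j<k} P_t(R_j)| ≤ ε |P_t(R_k)| for every k = 1, …, N, where |·| is (n−1)-dimensional Lebesgue measure. -/
import Mathlib


open MeasureTheory Set
open scoped ENNReal

noncomputable section

/-- An axis-parallel rectangle in `ℝ^d`: a product of `d` bounded (open) intervals. -/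
def Rect {d : ℕ} (a b : Fin d → ℝ) : Set (Fin d → ℝ) :=
  Set.univ.pi fun i => Set.Ioo (a i) (b i)

/-- Left endpoints of `R^*`: the rectangle with the same center as `R = Rect a b`,
the same sides in the first `m` coordinates, and the last side dilated by `3`. -/
def starA {m : ℕ} (a b : Fin (m + 1) → ℝ) : Fin (m + 1) → ℝ :=
  Function.update a (Fin.last m) (2 * a (Fin.last m) - b (Fin.last m))

/-- Right endpoints of `R^*`. -/
def starB {m : ℕ} (a b : Fin (m + 1) → ℝ) : Fin (m + 1) → ℝ :=
  Function.update b (Fin.last m) (2 * b (Fin.last m) - a (Fin.last m))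

/-- Property `(P₂)` with parameter `ε` for a finite sequence of axis-parallel rectangles
`R_k = Rect (a k) (b k)` in `ℝ^{m+1}`: the lengths `|P^⊥(R_k)|` of the sides parallel to
the last coordinate axis are nonincreasing, and
`|R_k ∩ ⋃_{j<k} R_j^*| ≤ ε |R_k|` for every `k`. -/
def P2prop {m : ℕ} (ε : ℝ) {N : ℕ} (a b : Fin N → Fin (m + 1) → ℝ) : Prop :=
  (∀ j k : Fin N, j ≤ k →
      b k (Fin.last m) - a k (Fin.last m) ≤ b j (Fin.last m) - a j (Fin.last m)) ∧
  ∀ k : Fin N,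
    volume (Rect (a k) (b k) ∩
        ⋃ (j : Fin N) (_ : j < k), Rect (starA (a j) (b j)) (starB (a j) (b j)))
      ≤ ENNReal.ofReal ε * volume (Rect (a k) (b k))

/-- The slice `P_t(E) = {x' ∈ ℝ^m : (x', t) ∈ E}` of a set `E ⊆ ℝ^{m+1}` by the
hyperplane perpendicular to the last coordinate axis at level `t`. -/
def sliceAt {m : ℕ} (t : ℝ) (E : Set (Fin (m + 1) → ℝ)) : Set (Fin m → ℝ) :=
  {x' | Fin.snoc x' t ∈ E}

lemma measurableSet_rect {d : ℕ} (a b : Fin d → ℝ) : MeasurableSet (Rect a b) :=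
  MeasurableSet.univ_pi fun _ => measurableSet_Ioo

lemma measurable_snocRight {m : ℕ} (t : ℝ) :
    Measurable (fun x' : Fin m → ℝ => Fin.snoc x' t : (Fin m → ℝ) → Fin (m + 1) → ℝ) := by
  apply measurable_pi_iff.2
  intro i
  induction i using Fin.lastCases with
  | last => simp only [Fin.snoc_last]; exact measurable_const
  | cast i => simp only [Fin.snoc_castSucc]; exact measurable_pi_apply i

lemma measurableSet_sliceAt_rect {m : ℕ} (t : ℝ) (a b : Fin (m + 1) → ℝ) :
    MeasurableSet (sliceAt t (Rect a b)) :=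
  (measurable_snocRight t) (measurableSet_rect a b)

lemma mem_sliceAt_rect {m : ℕ} {t : ℝ} {a b : Fin (m + 1) → ℝ} {x' : Fin m → ℝ} :
    x' ∈ sliceAt t (Rect a b) ↔
      (t ∈ Set.Ioo (a (Fin.last m)) (b (Fin.last m)) ∧
        x' ∈ Rect (a ∘ Fin.castSucc) (b ∘ Fin.castSucc)) := by
  simp only [sliceAt, Rect, Set.mem_setOf_eq, Set.mem_pi, Set.mem_univ, forall_true_left]
  constructor
  · intro h
    refine ⟨by simpa using h (Fin.last m), fun i => by simpa using h i.castSucc⟩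
  · rintro ⟨h1, h2⟩ i
    induction i using Fin.lastCases with
    | last => simpa using h1
    | cast i => simpa using h2 i

lemma volume_rect {d : ℕ} (a b : Fin d → ℝ) :
    volume (Rect a b) = ∏ i, ENNReal.ofReal (b i - a i) := by
  rw [Rect, volume_pi_pi]
  simp [Real.volume_Ioo]

/-- Slicing lemma: if a finite sequence of rectangles in `ℝ^n` (`n = m+1 ≥ 2`) has
property `(P₂)` with parameter `ε`, then for every `t ∈ ℝ` the sliced sequence of
`(n-1)`-dimensional rectangles has property `(P₁)` with the same parameter `ε`:
`|P_t(R_k) ∩ ⋃_{j<k} P_t(R_j)| ≤ ε |P_t(R_k)|` for all `k`. -/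
theorem slices_satisfy_P1
    (m : ℕ) (hm : 1 ≤ m) (ε : ℝ) (hε : 0 < ε) (N : ℕ)
    (a b : Fin N → Fin (m + 1) → ℝ) (hab : ∀ k i, a k i < b k i)
    (hP2 : P2prop ε a b) :
    ∀ t : ℝ, ∀ k : Fin N,
      volume (sliceAt t (Rect (a k) (b k)) ∩
          ⋃ (j : Fin N) (_ : j < k), sliceAt t (Rect (a j) (b j)))
        ≤ ENNReal.ofReal ε * volume (sliceAt t (Rect (a k) (b k))) := by
  intro t k
  by_cases ht : t ∈ Set.Ioo (a k (Fin.last m)) (b k (Fin.last m))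
  swap
  · have : sliceAt t (Rect (a k) (b k)) = ∅ := by
      ext x'
      simp only [mem_sliceAt_rect, Set.mem_empty_iff_false, iff_false]
      tauto
    simp [this]
  -- notation
  set S : Set (Fin m → ℝ) := sliceAt t (Rect (a k) (b k)) ∩
      ⋃ (j : Fin N) (_ : j < k), sliceAt t (Rect (a j) (b j)) with hSdef
  set Big : Set (Fin (m + 1) → ℝ) := Rect (a k) (b k) ∩
      ⋃ (j : Fin N) (_ : j < k), Rect (starA (a j) (b j)) (starB (a j) (b j)) with hBigdef
  have hS_meas : MeasurableSet S :=
    (measurableSet_sliceAt_rect t _ _).inter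
      (MeasurableSet.iUnion fun j => MeasurableSet.iUnion fun _ =>
        measurableSet_sliceAt_rect t _ _)
  have hBig_meas : MeasurableSet Big :=
    (measurableSet_rect _ _).inter
      (MeasurableSet.iUnion fun j => MeasurableSet.iUnion fun _ => measurableSet_rect _ _)
  -- the geometric key claim
  have key : ∀ s ∈ Set.Ioo (a k (Fin.last m)) (b k (Fin.last m)), ∀ x' ∈ S,
      (Fin.snoc x' s : Fin (m + 1) → ℝ) ∈ Big := by
    intro s hs x' hx'
    obtain ⟨hxk, hxU⟩ := hx'
    obtain ⟨htk, hxk'⟩ := mem_sliceAt_rect.1 hxk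
    have hxk2 : ∀ i : Fin m, x' i ∈ Set.Ioo (a k i.castSucc) (b k i.castSucc) :=
      fun i => by simpa using hxk' i (Set.mem_univ i)
    simp only [Set.mem_iUnion] at hxU
    obtain ⟨j, hj, hxj⟩ := hxU
    obtain ⟨htj, hxj'⟩ := mem_sliceAt_rect.1 hxj
    have hxj2 : ∀ i : Fin m, x' i ∈ Set.Ioo (a j i.castSucc) (b j i.castSucc) :=
      fun i => by simpa using hxj' i (Set.mem_univ i)
    have hlen := hP2.1 j k hj.le
    constructor
    · intro i _
      induction i using Fin.lastCases with
      | last => simpa using hs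
      | cast i => simpa using hxk2 i
    · simp only [Set.mem_iUnion]
      refine ⟨j, hj, ?_⟩
      intro i _
      induction i using Fin.lastCases with
      | last =>
        simp only [Fin.snoc_last, starA, starB, Function.update_self, Set.mem_Ioo]
        obtain ⟨hs1, hs2⟩ := hs
        obtain ⟨ht1, ht2⟩ := htk
        obtain ⟨ht3, ht4⟩ := htj
        constructor <;> linarith
      | cast i =>
        have hne : (i.castSucc : Fin (m + 1)) ≠ Fin.last m := (Fin.castSucc_lt_last i).ne
        simp only [Fin.snoc_castSucc, starA, starB, Function.update_of_ne hne]
        exact hxj2 i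
  -- the measurable equivalence ℝ^{m+1} ≃ ℝ × ℝ^m
  set e := MeasurableEquiv.piFinSuccAbove (fun _ : Fin (m + 1) => ℝ) (Fin.last m) with he
  have hvp := volume_preserving_piFinSuccAbove (fun _ : Fin (m + 1) => ℝ) (Fin.last m)
  have hsub : (Set.Ioo (a k (Fin.last m)) (b k (Fin.last m))) ×ˢ S ⊆ e.symm ⁻¹' Big := by
    rintro ⟨s, x'⟩ ⟨hs, hx'⟩
    have : e.symm (s, x') = Fin.snoc x' s := by
      simp only [he, MeasurableEquiv.piFinSuccAbove_symm_apply, Fin.insertNthEquiv_apply]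
      exact Fin.insertNth_last' s x'
    simpa only [Set.mem_preimage, this] using key s hs x' hx'
  have hmeas_pre : volume (e.symm ⁻¹' Big) = volume Big :=
    (MeasurePreserving.symm e hvp).measure_preimage hBig_meas.nullMeasurableSet
  have hle1 : volume ((Set.Ioo (a k (Fin.last m)) (b k (Fin.last m))) ×ˢ S) ≤ volume Big := by
    rw [← hmeas_pre]; exact measure_mono hsub
  have hprod : volume ((Set.Ioo (a k (Fin.last m)) (b k (Fin.last m))) ×ˢ S)
      = ENNReal.ofReal (b k (Fin.last m) - a k (Fin.last m)) * volume S := by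
    rw [Measure.volume_eq_prod, Measure.prod_prod, Real.volume_Ioo]
  -- the slice of R_k is a rectangle
  have hslice_eq : sliceAt t (Rect (a k) (b k))
      = Rect (a k ∘ Fin.castSucc) (b k ∘ Fin.castSucc) := by
    ext x'
    rw [mem_sliceAt_rect]
    exact ⟨fun h => h.2, fun h => ⟨ht, h⟩⟩
  have hvolR : volume (Rect (a k) (b k))
      = (∏ i : Fin m, ENNReal.ofReal (b k i.castSucc - a k i.castSucc))
        * ENNReal.ofReal (b k (Fin.last m) - a k (Fin.last m)) := by
    rw [volume_rect, Fin.prod_univ_castSucc]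
  have hvolS : volume (sliceAt t (Rect (a k) (b k)))
      = ∏ i : Fin m, ENNReal.ofReal (b k i.castSucc - a k i.castSucc) := by
    rw [hslice_eq, volume_rect]; rfl
  set L := ENNReal.ofReal (b k (Fin.last m) - a k (Fin.last m)) with hL
  have hL0 : L ≠ 0 := by
    simp only [hL, ne_eq, ENNReal.ofReal_eq_zero, not_le]
    linarith [hab k (Fin.last m)]
  have hLtop : L ≠ ∞ := ENNReal.ofReal_ne_top
  have hchain : L * volume S ≤ L * (ENNReal.ofReal ε * volume (sliceAt t (Rect (a k) (b k)))) := by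
    calc L * volume S ≤ volume Big := by rw [← hprod]; exact hle1
      _ ≤ ENNReal.ofReal ε * volume (Rect (a k) (b k)) := hP2.2 k
      _ = L * (ENNReal.ofReal ε * volume (sliceAt t (Rect (a k) (b k)))) := by
          rw [hvolR, hvolS]; ring
  exact (ENNReal.mul_le_mul_iff_right hL0 hLtop).1 hchain
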